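/- Let T be a tree of order n ≥ 4 with diameter exactly 3 (a double star). Then γ_tc(M(T)) = 2n − 4. -/

import Mathlib

open SimpleGraph

/-- The middle graph `M(G)`: vertices are `V(G) ⊕ E(G)`; an edge-vertex is adjacent to
another edge-vertex iff the edges are distinct and share an endpoint, and a vertex is
adjacent to an edge iff it is incident to it. -/
def middleGraph {V : Type*} (G : SimpleGraph V) : SimpleGraph (V ⊕ G.edgeSet) where
  Adj x y :=
    match x, y with
    | Sum.inl _, Sum.inl _ => False
    | Sum.inl v, Sum.inr e => v ∈ (e : Sym2 V)
    | Sum.inr e, Sum.inl v => v ∈ (e : Sym2 V)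
    | Sum.inr e, Sum.inr f => e ≠ f ∧ ∃ v, v ∈ (e : Sym2 V) ∧ v ∈ (f : Sym2 V)
  symm := by
    refine ⟨?_⟩
    rintro (v|e) (w|f) h
    · exact h
    · exact h
    · exact h
    · exact ⟨h.1.symm, h.2.imp fun v hv => ⟨hv.2, hv.1⟩⟩
  loopless := by
    refine ⟨?_⟩
    rintro (v|e) h
    · exact h
    · exact h.1 rfl

/-- `D` is a total dominating set of `G`: every vertex has a neighbour in `D`. -/
def IsTotalDomSet {V : Type*} (G : SimpleGraph V) (D : Set V) : Prop :=
  ∀ v : V, ∃ u ∈ D, G.Adj v u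

/-- `D` is a total outer-connected dominating set of `G`: it is total dominating and
the subgraph induced on the complement of `D` is connected. -/
def IsTOCDomSet {V : Type*} (G : SimpleGraph V) (D : Set V) : Prop :=
  IsTotalDomSet G D ∧ (G.induce Dᶜ).Connected

/-- The total domination number `γₜ(G)`. -/
noncomputable def totalDomNum {V : Type*} (G : SimpleGraph V) : ℕ :=
  sInf {k | ∃ D : Set V, IsTotalDomSet G D ∧ D.ncard = k}

/-- The total outer-connected domination number `γ_tc(G)`. -/
noncomputable def tocDomNum {V : Type*} (G : SimpleGraph V) : ℕ :=
  sInf {k | ∃ D : Set V, IsTOCDomSet G D ∧ D.ncard = k}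

/-- The set of leaves (vertices of degree 1) of `G`. -/
def leafSet {V : Type*} (G : SimpleGraph V) : Set V :=
  {v | ∃ u, G.neighborSet v = {u}}

/-- The wheel graph with hub `none` and rim cycle on `Fin n`. -/
def wheelGraph (n : ℕ) : SimpleGraph (Option (Fin n)) where
  Adj x y :=
    match x, y with
    | none, none => False
    | none, some _ => True
    | some _, none => True
    | some i, some j => (SimpleGraph.cycleGraph n).Adj i j
  symm := by
    refine ⟨?_⟩
    rintro (_|i) (_|j) h
    · exact h
    · exact h
    · exact h
    · exact (SimpleGraph.cycleGraph n).symm.symm _ _ h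
  loopless := by
    refine ⟨?_⟩
    rintro (_|i) h
    · exact h
    · exact (SimpleGraph.cycleGraph n).loopless.irrefl i h

/-- The corona `G ∘ K₁`: to each vertex `a` of `G` (copy `Sum.inl a`) a pendant
vertex `Sum.inr a` is attached. -/
def corona {V : Type*} (G : SimpleGraph V) : SimpleGraph (V ⊕ V) where
  Adj x y :=
    match x, y with
    | Sum.inl a, Sum.inl b => G.Adj a b
    | Sum.inl a, Sum.inr b => a = b
    | Sum.inr a, Sum.inl b => a = b
    | Sum.inr _, Sum.inr _ => False
  symm := by
    refine ⟨?_⟩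
    rintro (a|a) (b|b) h
    · exact G.symm.symm _ _ h
    · exact h.symm
    · exact h.symm
    · exact h
  loopless := by
    refine ⟨?_⟩
    rintro (a|a) h
    · exact G.loopless.irrefl a h
    · exact h

/-- The 2-corona `G ∘ P₂`: to each vertex `a` of `G` (copy `Sum.inl a`) a path
`Sum.inl a — Sum.inr (Sum.inl a) — Sum.inr (Sum.inr a)` of length 2 is attached. -/
def corona2 {V : Type*} (G : SimpleGraph V) : SimpleGraph (V ⊕ V ⊕ V) where
  Adj x y :=
    match x, y with
    | Sum.inl a, Sum.inl b => G.Adj a b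
    | Sum.inl a, Sum.inr (Sum.inl b) => a = b
    | Sum.inr (Sum.inl a), Sum.inl b => a = b
    | Sum.inr (Sum.inl a), Sum.inr (Sum.inr b) => a = b
    | Sum.inr (Sum.inr a), Sum.inr (Sum.inl b) => a = b
    | _, _ => False
  symm := by
    refine ⟨?_⟩
    rintro (a|a|a) (b|b|b) h <;> first | exact G.symm.symm _ _ h | exact h.symm | exact h
  loopless := by
    refine ⟨?_⟩
    rintro (a|a|a) h
    · exact G.loopless.irrefl a h
    · exact h
    · exact h

/-- The spider `S_{1,n,n}`: hub `none`, middle vertices `some (.inl i)`,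
leaves `some (.inr i)`; the star `K_{1,n}` with every edge subdivided once. -/
def spiderGraph (n : ℕ) : SimpleGraph (Option (Fin n ⊕ Fin n)) where
  Adj x y :=
    match x, y with
    | none, some (Sum.inl _) => True
    | some (Sum.inl _), none => True
    | some (Sum.inl i), some (Sum.inr j) => i = j
    | some (Sum.inr i), some (Sum.inl j) => i = j
    | _, _ => False
  symm := by
    refine ⟨?_⟩
    rintro (_|i|i) (_|j|j) h <;> first | exact h.symm | exact h
  loopless := by
    refine ⟨?_⟩
    rintro (_|i|i) h <;> exact h

/-- The friendship graph `Fₙ`: `n` triangles sharing the common vertex `none`. -/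
def friendshipGraph (n : ℕ) : SimpleGraph (Option (Fin n × Fin 2)) where
  Adj x y :=
    match x, y with
    | none, some _ => True
    | some _, none => True
    | some (i, a), some (j, b) => i = j ∧ a ≠ b
    | none, none => False
  symm := by
    refine ⟨?_⟩
    rintro (_|⟨i,a⟩) (_|⟨j,b⟩) h <;> first | exact ⟨h.1.symm, h.2.symm⟩ | exact h
  loopless := by
    refine ⟨?_⟩
    rintro (_|⟨i,a⟩) h
    · exact h
    · exact h.2 rfl

section DoubleStar

variable {V : Type*} {T : SimpleGraph V}

private lemma path_eq' (hA : T.IsAcyclic) {a b : V} {p q : T.Walk a b}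
    (hp : p.IsPath) (hq : q.IsPath) : p = q :=
  Subtype.ext_iff.mp (hA.path_unique ⟨p, hp⟩ ⟨q, hq⟩)

private lemma walk_decomp {a b : V} (p : T.Walk a b) (h : p.length ≤ 3) :
    a = b ∨ T.Adj a b ∨ (∃ m, T.Adj a m ∧ T.Adj m b ∧ p.support = [a, m, b]) ∨
      ∃ m n, T.Adj a m ∧ T.Adj m n ∧ T.Adj n b ∧ p.support = [a, m, n, b] := by
  cases p with
  | nil => exact Or.inl rfl
  | cons h1 q =>
    cases q with
    | nil => exact Or.inr (Or.inl h1)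
    | cons h2 q =>
      cases q with
      | nil => exact Or.inr (Or.inr (Or.inl ⟨_, h1, h2, by simp⟩))
      | cons h3 q =>
        cases q with
        | nil => exact Or.inr (Or.inr (Or.inr ⟨_, _, h1, h2, h3, by simp⟩))
        | cons h4 q => simp only [Walk.length_cons] at h; omega

private lemma lemA (hT : T.IsTree) (hd3 : ∀ a b : V, T.dist a b ≤ 3)
    {u c1 c2 v : V} (h1 : T.Adj u c1) (h2 : T.Adj c1 c2) (h3 : T.Adj c2 v)
    (hd : T.dist u v = 3) : ∀ z, T.Adj u z → z = c1 := by
  intro z hz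
  by_contra hne
  have hP1 : (Walk.cons h1 (Walk.cons h2 (Walk.cons h3 Walk.nil))).IsPath :=
    SimpleGraph.Walk.isPath_of_length_eq_dist _ (by simp [hd])
  obtain ⟨q, hq, hql⟩ := hT.isConnected.exists_path_of_dist z v
  have hq3 : q.length ≤ 3 := by rw [hql]; exact hd3 z v
  have huv : u ≠ v := by rintro rfl; simp [SimpleGraph.dist_self] at hd
  rcases walk_decomp q hq3 with rfl | hzv | ⟨m, hzm, hmv, hsup⟩ | ⟨m, n, hzm, hmn, hnv, hsup⟩
  · have h' := T.dist_le (Walk.cons hz Walk.nil)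
    simp only [Walk.length_cons, Walk.length_nil] at h'
    omega
  · have h' := T.dist_le (Walk.cons hz (Walk.cons hzv Walk.nil))
    simp only [Walk.length_cons, Walk.length_nil] at h'
    omega
  · have hnd := hq.support_nodup
    rw [hsup] at hnd
    simp only [List.nodup_cons, List.mem_cons, List.mem_singleton, List.not_mem_nil,
      not_or, List.nodup_nil] at hnd
    have huz : u ≠ z := hz.ne
    have hum : u ≠ m := by
      rintro rfl
      have h' := T.dist_le (Walk.cons hmv Walk.nil)
      simp only [Walk.length_cons, Walk.length_nil] at h'
      omega
    have hW : (Walk.cons hz (Walk.cons hzm (Walk.cons hmv Walk.nil))).IsPath := by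
      apply SimpleGraph.Walk.IsPath.mk'
      simp only [Walk.support_cons, Walk.support_nil, List.nodup_cons, List.mem_cons,
        List.mem_singleton, List.not_mem_nil, not_or, List.nodup_nil]
      tauto
    have hsupeq := congrArg Walk.support (path_eq' hT.IsAcyclic hW hP1)
    simp only [Walk.support_cons, Walk.support_nil, List.cons.injEq, and_true, true_and] at hsupeq
    exact hne hsupeq.1
  · have hnd := hq.support_nodup
    rw [hsup] at hnd
    simp only [List.nodup_cons, List.mem_cons, List.mem_singleton, List.not_mem_nil,
      not_or, List.nodup_nil] at hnd
    have huz : u ≠ z := hz.ne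
    have hum : u ≠ m := by
      rintro rfl
      have h' := T.dist_le (Walk.cons hmn (Walk.cons hnv Walk.nil))
      simp only [Walk.length_cons, Walk.length_nil] at h'
      omega
    have hun : u ≠ n := by
      rintro rfl
      have h' := T.dist_le (Walk.cons hnv Walk.nil)
      simp only [Walk.length_cons, Walk.length_nil] at h'
      omega
    have hW : (Walk.cons hz (Walk.cons hzm (Walk.cons hmn (Walk.cons hnv Walk.nil)))).IsPath := by
      apply SimpleGraph.Walk.IsPath.mk'
      simp only [Walk.support_cons, Walk.support_nil, List.nodup_cons, List.mem_cons,
        List.mem_singleton, List.not_mem_nil, not_or, List.nodup_nil]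
      tauto
    have hlen := congrArg Walk.length (path_eq' hT.IsAcyclic hW hP1)
    simp only [Walk.length_cons, Walk.length_nil] at hlen
    omega

private lemma lemB (hT : T.IsTree) (hd3 : ∀ a b : V, T.dist a b ≤ 3)
    {u c1 c2 v : V} (h1 : T.Adj u c1) (h2 : T.Adj c1 c2) (h3 : T.Adj c2 v)
    (hd : T.dist u v = 3) (hv : ∀ z, T.Adj v z → z = c2) :
    ∀ w, w ≠ c1 → w ≠ c2 → T.Adj c1 w ∨ T.Adj c2 w := by
  have hu : ∀ z, T.Adj u z → z = c1 := lemA hT hd3 h1 h2 h3 hd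
  intro w hw1 hw2
  obtain ⟨q, hq, hql⟩ := hT.isConnected.exists_path_of_dist u w
  have hq3 : q.length ≤ 3 := by rw [hql]; exact hd3 u w
  rcases walk_decomp q hq3 with rfl | huw | ⟨a, hua, haw, hsup⟩ | ⟨a, b, hua, hab, hbw, hsup⟩
  · exact Or.inl h1.symm
  · exact absurd (hu w huw) hw1
  · rw [hu a hua] at haw; exact Or.inl haw
  · have hac1 : c1 = a := (hu a hua).symm
    subst hac1
    by_cases hbc2 : b = c2
    · subst hbc2; exact Or.inr hbw
    exfalso
    have hbv : b ≠ v := by rintro rfl; exact h2.ne (hv c1 hab.symm)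
    have hwv : w ≠ v := by rintro rfl; exact hbc2 (hv b hbw.symm)
    have hc1v : c1 ≠ v := by
      rintro rfl
      have h' := T.dist_le (Walk.cons h1 Walk.nil)
      simp only [Walk.length_cons, Walk.length_nil] at h'
      omega
    have hbc1 : b ≠ c1 := hab.ne'
    have hwb : w ≠ b := hbw.ne'
    have hc12 : c1 ≠ c2 := h2.ne
    have hc2v : c2 ≠ v := h3.ne
    have hW : (Walk.cons hbw.symm (Walk.cons hab.symm (Walk.cons h2 (Walk.cons h3 Walk.nil)))).IsPath := by
      apply SimpleGraph.Walk.IsPath.mk'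
      simp only [Walk.support_cons, Walk.support_nil, List.nodup_cons, List.mem_cons,
        List.mem_singleton, List.not_mem_nil, not_or, List.nodup_nil]
      tauto
    obtain ⟨r, hr, hrl⟩ := hT.isConnected.exists_path_of_dist w v
    have hlen := congrArg Walk.length (path_eq' hT.IsAcyclic hW hr)
    simp only [Walk.length_cons, Walk.length_nil] at hlen
    have := hd3 w v
    omega

private lemma lemC (hT : T.IsTree) {c1 c2 : V} (h2 : T.Adj c1 c2)
    (hB : ∀ w, w ≠ c1 → w ≠ c2 → T.Adj c1 w ∨ T.Adj c2 w)
    {w : V} (hw1 : w ≠ c1) (hw2 : w ≠ c2) (hcw : T.Adj c1 w) :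
    ∀ z, T.Adj w z → z = c1 := by
  intro z hwz
  by_contra hz1
  have hc1w : c1 ≠ w := hcw.ne
  have hwz' : w ≠ z := hwz.ne
  have hc1z : c1 ≠ z := fun h => hz1 h.symm
  by_cases hz2 : z = c2
  · subst hz2
    have hWa : (Walk.cons h2 Walk.nil).IsPath := by
      apply SimpleGraph.Walk.IsPath.mk'; simp [h2.ne]
    have hWb : (Walk.cons hcw (Walk.cons hwz Walk.nil)).IsPath := by
      apply SimpleGraph.Walk.IsPath.mk'
      simp only [Walk.support_cons, Walk.support_nil, List.nodup_cons, List.mem_cons,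
        List.mem_singleton, List.not_mem_nil, not_or, List.nodup_nil]
      have := h2.ne
      tauto
    have := congrArg Walk.length (path_eq' hT.IsAcyclic hWa hWb)
    simp at this
  · rcases hB z hz1 hz2 with hz | hz
    · have hWa : (Walk.cons hz Walk.nil).IsPath := by
        apply SimpleGraph.Walk.IsPath.mk'; simp [hz.ne]
      have hWb : (Walk.cons hcw (Walk.cons hwz Walk.nil)).IsPath := by
        apply SimpleGraph.Walk.IsPath.mk'
        simp only [Walk.support_cons, Walk.support_nil, List.nodup_cons, List.mem_cons,
          List.mem_singleton, List.not_mem_nil, not_or, List.nodup_nil]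
        tauto
      have := congrArg Walk.length (path_eq' hT.IsAcyclic hWa hWb)
      simp at this
    · have hWa : (Walk.cons h2 Walk.nil).IsPath := by
        apply SimpleGraph.Walk.IsPath.mk'; simp [h2.ne]
      have hWb : (Walk.cons hcw (Walk.cons hwz (Walk.cons hz.symm Walk.nil))).IsPath := by
        apply SimpleGraph.Walk.IsPath.mk'
        simp only [Walk.support_cons, Walk.support_nil, List.nodup_cons, List.mem_cons,
          List.mem_singleton, List.not_mem_nil, not_or, List.nodup_nil]
        have := h2.ne
        tauto
      have := congrArg Walk.length (path_eq' hT.IsAcyclic hWa hWb)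
      simp at this

private lemma doubleStar [Nonempty V] (hT : T.IsTree) (hdiam : T.diam = 3) :
    ∃ c1 c2 : V, T.Adj c1 c2 ∧
      (∀ w, w ≠ c1 → w ≠ c2 →
        (T.Adj c1 w ∧ ∀ z, T.Adj w z → z = c1) ∨ (T.Adj c2 w ∧ ∀ z, T.Adj w z → z = c2)) ∧
      (∃ x, T.Adj c1 x ∧ x ≠ c1 ∧ x ≠ c2) ∧ ∃ y, T.Adj c2 y ∧ y ≠ c1 ∧ y ≠ c2 := by
  have hd3 : ∀ a b : V, T.dist a b ≤ 3 := by
    intro a b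
    have h' := SimpleGraph.dist_le_diam (G := T) (u := a) (v := b)
      (SimpleGraph.ediam_ne_top_of_diam_ne_zero (by rw [hdiam]; exact three_ne_zero))
    rwa [hdiam] at h'
  obtain ⟨u, v, huv⟩ := T.exists_dist_eq_diam
  rw [hdiam] at huv
  obtain ⟨p, hp, hpl⟩ := hT.isConnected.exists_path_of_dist u v
  rcases walk_decomp p (by rw [hpl, huv]) with rfl | h | ⟨m, h1', h2', _⟩ | ⟨c1, c2, h1, h2, h3, _⟩
  · rw [SimpleGraph.dist_self] at huv; exact absurd huv (by norm_num)
  · have h' := T.dist_le (Walk.cons h Walk.nil)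
    simp only [Walk.length_cons, Walk.length_nil] at h'
    omega
  · have h' := T.dist_le (Walk.cons h1' (Walk.cons h2' Walk.nil))
    simp only [Walk.length_cons, Walk.length_nil] at h'
    omega
  · have hu := lemA hT hd3 h1 h2 h3 huv
    have hvd : T.dist v u = 3 := by rw [SimpleGraph.dist_comm]; exact huv
    have hv := lemA hT hd3 h3.symm h2.symm h1.symm hvd
    have hB := lemB hT hd3 h1 h2 h3 huv hv
    have hB' : ∀ w, w ≠ c2 → w ≠ c1 → T.Adj c2 w ∨ T.Adj c1 w :=
      fun w hA hB2 => (hB w hB2 hA).symm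
    have huc2 : u ≠ c2 := by
      rintro rfl
      have h' := T.dist_le (Walk.cons h3 Walk.nil)
      simp only [Walk.length_cons, Walk.length_nil] at h'
      omega
    have hvc1 : v ≠ c1 := by
      rintro rfl
      have h' := T.dist_le (Walk.cons h1 Walk.nil)
      simp only [Walk.length_cons, Walk.length_nil] at h'
      omega
    refine ⟨c1, c2, h2, ?_, ⟨u, h1.symm, h1.ne, huc2⟩, ⟨v, h3, hvc1, h3.ne'⟩⟩
    intro w hw1 hw2
    rcases hB w hw1 hw2 with h | h
    · exact Or.inl ⟨h, lemC hT h2 hB hw1 hw2 h⟩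
    · exact Or.inr ⟨h, lemC hT h2.symm hB' hw2 hw1 h⟩
end DoubleStar

theorem stmt11 {V : Type*} [Fintype V] (T : SimpleGraph V) (hT : T.IsTree)
    (hn : 4 ≤ Fintype.card V) (hdiam : T.diam = 3) :
    tocDomNum (middleGraph T) = 2 * Fintype.card V - 4 := by
  classical
  have hne : Nonempty V := Fintype.card_pos_iff.mp (by omega)
  obtain ⟨c1, c2, hc, hclass, ⟨x, hxadj, hx1, hx2⟩, ⟨y, hyadj, hy1, hy2⟩⟩ := doubleStar hT hdiam
  have hcardE : T.edgeFinset.card + 1 = Fintype.card V := hT.card_edgeFinset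
  have hcardE' : T.edgeFinset.card = Fintype.card T.edgeSet := by
    rw [SimpleGraph.edgeFinset, Set.toFinset_card]
  have hcardSum : Nat.card (V ⊕ T.edgeSet) = 2 * Fintype.card V - 1 := by
    rw [Nat.card_eq_fintype_card, Fintype.card_sum, ← hcardE']; omega
  have he0 : s(c1, c2) ∈ T.edgeSet := T.mem_edgeSet.mpr hc
  set K : Set (V ⊕ T.edgeSet) := {Sum.inl c1, Sum.inl c2, Sum.inr ⟨s(c1, c2), he0⟩} with hKdef
  have hKcard : K.ncard = 3 := by
    rw [Set.ncard_eq_three]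
    exact ⟨_, _, _, by simp [hc.ne], by simp, by simp, rfl⟩
  -- leaves
  have hleaf : ∀ w, w ≠ c1 → w ≠ c2 → ∃ c, (c = c1 ∨ c = c2) ∧ T.Adj c w ∧ ∀ z, T.Adj w z → z = c := by
    intro w hw1 hw2
    rcases hclass w hw1 hw2 with ⟨h, hu⟩ | ⟨h, hu⟩
    exacts [⟨c1, Or.inl rfl, h, hu⟩, ⟨c2, Or.inr rfl, h, hu⟩]
  have hedge_eq : ∀ (w c : V), (∀ z, T.Adj w z → z = c) →
      ∀ e : T.edgeSet, w ∈ (e : Sym2 V) → (e : Sym2 V) = s(w, c) := by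
    intro w c hcu e hw
    obtain ⟨b, hb⟩ := Sym2.mem_iff_exists.mp hw
    have hmem : s(w, b) ∈ T.edgeSet := by rw [← hb]; exact e.prop
    rw [hb, hcu b (T.mem_edgeSet.mp hmem)]
  have hforce : ∀ D : Set (V ⊕ T.edgeSet), IsTotalDomSet (middleGraph T) D →
      ∀ w, w ≠ c1 → w ≠ c2 → ∀ e : T.edgeSet, w ∈ (e : Sym2 V) → Sum.inr e ∈ D := by
    intro D hD w hw1 hw2 e hwe
    obtain ⟨c, _, hcadj, huniq⟩ := hleaf w hw1 hw2
    obtain ⟨d, hdD, hadj⟩ := hD (Sum.inl w)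
    rcases d with d | f
    · exact hadj.elim
    · have hwf : w ∈ (f : Sym2 V) := hadj
      have hef : e = f := Subtype.ext (by
        rw [hedge_eq w c huniq e hwe, hedge_eq w c huniq f hwf])
      rwa [hef]
  -- Upper bound: Kᶜ is a TOC dominating set
  have hUBdom : IsTotalDomSet (middleGraph T) Kᶜ := by
    rintro (w | e)
    · by_cases hw1 : w = c1
      · subst hw1
        refine ⟨Sum.inr ⟨s(w, x), T.mem_edgeSet.mpr hxadj⟩, ?_, Sym2.mem_mk_left w x⟩
        simp [hKdef, Sym2.eq_iff, hx1, hx2, hc.ne]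
      by_cases hw2 : w = c2
      · subst hw2
        refine ⟨Sum.inr ⟨s(w, y), T.mem_edgeSet.mpr hyadj⟩, ?_, Sym2.mem_mk_left w y⟩
        simp [hKdef, Sym2.eq_iff, hy1, hy2, hc.ne']
      · obtain ⟨c, _, hcadj, _⟩ := hleaf w hw1 hw2
        refine ⟨Sum.inr ⟨s(c, w), T.mem_edgeSet.mpr hcadj⟩, ?_, Sym2.mem_mk_right c w⟩
        simp [hKdef, Sym2.eq_iff, hw1, hw2]
    · obtain ⟨e, he⟩ := e
      induction e using Sym2.ind with
      | _ a b =>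
      have hab : T.Adj a b := T.mem_edgeSet.mp he
      by_cases ha1 : a = c1
      · subst ha1
        by_cases hb2 : b = c2
        · subst hb2
          refine ⟨Sum.inr ⟨s(a, x), T.mem_edgeSet.mpr hxadj⟩, ?_, ?_, a,
            Sym2.mem_mk_left a b, Sym2.mem_mk_left a x⟩
          · simp [hKdef, Sym2.eq_iff, hx1, hx2, hc.ne]
          · intro hcontra
            rw [Subtype.mk.injEq, Sym2.eq_iff] at hcontra
            rcases hcontra with ⟨-, h⟩ | ⟨h, -⟩
            · exact hx2 h.symm
            · exact hx1 h.symm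
        · refine ⟨Sum.inl b, ?_, Sym2.mem_mk_right a b⟩
          simp [hKdef, hab.ne', hb2]
      by_cases ha2 : a = c2
      · subst ha2
        by_cases hb1 : b = c1
        · subst hb1
          refine ⟨Sum.inr ⟨s(b, x), T.mem_edgeSet.mpr hxadj⟩, ?_, ?_, b,
            Sym2.mem_mk_right a b, Sym2.mem_mk_left b x⟩
          · simp [hKdef, Sym2.eq_iff, hx1, hx2, hc.ne]
          · intro hcontra
            rw [Subtype.mk.injEq, Sym2.eq_iff] at hcontra
            rcases hcontra with ⟨h, -⟩ | ⟨h, -⟩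
            · exact hab.ne h
            · exact hx2 h.symm
        · refine ⟨Sum.inl b, ?_, Sym2.mem_mk_right a b⟩
          simp [hKdef, hab.ne', hb1]
      · refine ⟨Sum.inl a, ?_, Sym2.mem_mk_left a b⟩
        simp [hKdef, ha1, ha2]
  have hUBconn : ((middleGraph T).induce Kᶜᶜ).Connected := by
    rw [compl_compl]
    have hE0K : Sum.inr (⟨s(c1, c2), he0⟩ : T.edgeSet) ∈ K := by simp [hKdef]
    have key : ∀ z (hz : z ∈ K),
        ((middleGraph T).induce K).Reachable ⟨z, hz⟩ ⟨Sum.inr ⟨s(c1, c2), he0⟩, hE0K⟩ := by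
      intro z hz
      have hz' := hz
      rw [hKdef] at hz'
      simp only [Set.mem_insert_iff, Set.mem_singleton_iff] at hz'
      rcases hz' with rfl | rfl | rfl
      · apply SimpleGraph.Adj.reachable
        show (middleGraph T).Adj (Sum.inl c1) (Sum.inr ⟨s(c1, c2), he0⟩)
        exact Sym2.mem_mk_left c1 c2
      · apply SimpleGraph.Adj.reachable
        show (middleGraph T).Adj (Sum.inl c2) (Sum.inr ⟨s(c1, c2), he0⟩)
        exact Sym2.mem_mk_right c1 c2
      · exact Reachable.refl _
    haveI : Nonempty ↥K := ⟨⟨_, hE0K⟩⟩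
    refine ⟨?_⟩
    intro a b
    exact (key a.1 a.2).trans (key b.1 b.2).symm
  have hKfin : K.Finite := Set.toFinite K
  have hKCcard : Kᶜ.ncard = 2 * Fintype.card V - 4 := by
    have h := Set.ncard_add_ncard_compl K (Set.toFinite K) (Set.toFinite Kᶜ)
    rw [hKcard, hcardSum] at h
    omega
  -- Lower bound
  have hLB : ∀ D : Set (V ⊕ T.edgeSet), IsTOCDomSet (middleGraph T) D →
      2 * Fintype.card V - 4 ≤ D.ncard := by
    rintro D ⟨hDtot, hDconn⟩
    suffices hc3 : Dᶜ.ncard ≤ 3 by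
      have h := Set.ncard_add_ncard_compl D (Set.toFinite D) (Set.toFinite Dᶜ)
      rw [hcardSum] at h
      omega
    by_cases hex : ∃ w, w ≠ c1 ∧ w ≠ c2 ∧ Sum.inl w ∈ Dᶜ
    · obtain ⟨w, hw1, hw2, hwD⟩ := hex
      have hsub : Dᶜ ⊆ {Sum.inl w} := by
        intro a haD
        obtain ⟨p⟩ := hDconn.preconnected ⟨Sum.inl w, hwD⟩ ⟨a, haD⟩
        by_cases hnil : p.Nil
        · simp only [Set.mem_singleton_iff]
          exact (congrArg Subtype.val hnil.eq).symm
        · exfalso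
          rw [Walk.not_nil_iff] at hnil
          obtain ⟨b, hadj, q, -⟩ := hnil
          have hadj' : (middleGraph T).Adj (Sum.inl w) b.val := hadj
          obtain ⟨bval, hbD⟩ := b
          rcases bval with bv | be
          · exact hadj'
          · exact hbD (hforce D hDtot w hw1 hw2 be hadj')
      calc Dᶜ.ncard ≤ ({Sum.inl w} : Set (V ⊕ T.edgeSet)).ncard :=
            Set.ncard_le_ncard hsub (Set.toFinite _)
        _ ≤ 3 := by simp
    · push_neg at hex
      have hsub : Dᶜ ⊆ K := by
        rintro (w | f) haD
        · by_cases hw1 : w = c1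
          · subst hw1; simp [hKdef]
          by_cases hw2 : w = c2
          · subst hw2; simp [hKdef]
          · exact absurd haD (hex w hw1 hw2)
        · obtain ⟨fv, hf⟩ := f
          induction fv using Sym2.ind with
          | _ a b =>
          have hab : T.Adj a b := T.mem_edgeSet.mp hf
          by_cases ha1 : a = c1
          · subst ha1
            by_cases hb2 : b = c2
            · subst hb2; simp [hKdef]
            · exact absurd haD (fun hmem => hmem (hforce D hDtot b hab.ne' hb2
                ⟨s(a, b), hf⟩ (Sym2.mem_mk_right a b)))
          by_cases ha2 : a = c2
          · subst ha2
            by_cases hb1 : b = c1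
            · subst hb1
              have : (⟨s(a, b), hf⟩ : T.edgeSet) = ⟨s(b, a), he0⟩ := Subtype.ext (Sym2.eq_swap)
              rw [hKdef]
              simp [this]
            · exact absurd haD (fun hmem => hmem (hforce D hDtot b hb1 hab.ne'
                ⟨s(a, b), hf⟩ (Sym2.mem_mk_right a b)))
          · exact absurd haD (fun hmem => hmem (hforce D hDtot a ha1 ha2
              ⟨s(a, b), hf⟩ (Sym2.mem_mk_left a b)))
      calc Dᶜ.ncard ≤ K.ncard := Set.ncard_le_ncard hsub hKfin
        _ = 3 := hKcard
  -- conclude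
  have hmemS : 2 * Fintype.card V - 4 ∈
      {k | ∃ D : Set (V ⊕ T.edgeSet), IsTOCDomSet (middleGraph T) D ∧ D.ncard = k} :=
    ⟨Kᶜ, ⟨hUBdom, hUBconn⟩, hKCcard⟩
  unfold tocDomNum
  apply le_antisymm
  · exact Nat.sInf_le hmemS
  · have hmem := Nat.sInf_mem (⟨_, hmemS⟩ : Set.Nonempty _)
    obtain ⟨D, hD, hcard⟩ := hmem
    rw [← hcard]
    exact hLB D hD
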